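/- Let φ : E(𝒜) → E(ℬ) be a sequential isomorphism between effect sets of von Neumann algebras, let Z, Z' ∈ E(𝒜) be central, and let P, P' ∈ 𝒜 be mutually orthogonal projections whose images satisfy φ(P + P') = φ(P) + φ(P'). Then ZP + Z'P' ∈ E(𝒜) and φ(ZP + Z'P') = φ(ZP) + φ(Z'P'). -/

import Mathlib

set_option synthInstance.maxHeartbeats 1000000
set_option maxHeartbeats 1000000

/-- The effects of a von Neumann algebra `M`: elements `a` of `M` with `0 ≤ a ≤ 1`
in the Loewner order. -/
def IsVNEffect {H : Type*} [NormedAddCommGroup H] [InnerProductSpace ℂ H] [CompleteSpace H]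
    (M : VonNeumannAlgebra H) (a : H →L[ℂ] H) : Prop :=
  a ∈ M ∧ 0 ≤ a ∧ a ≤ 1

open scoped NNReal ContinuousFunctionalCalculus

lemma commute_cfc_real {A : Type*} [TopologicalSpace A] [Ring A] [StarRing A]
    [Algebra ℝ A] [IsTopologicalRing A] [T2Space A]
    [ContinuousFunctionalCalculus ℝ A (IsSelfAdjoint : A → Prop)]
    {a b : A} (hab : Commute a b) (f : ℝ → ℝ) : Commute (cfc f a) b := by
  by_cases ha : IsSelfAdjoint a
  · by_cases hf : ContinuousOn f (spectrum ℝ a)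
    · rw [cfc_apply f a ha hf]
      have key : ∀ g : C(spectrum ℝ a, ℝ), Commute (cfcHom ha g) b := by
        intro g
        induction g using ContinuousMap.induction_on_of_compact with
        | const r =>
          have : (ContinuousMap.const (spectrum ℝ a) r) = algebraMap ℝ C(spectrum ℝ a, ℝ) r := rfl
          rw [this, AlgHomClass.commutes]
          exact Algebra.commute_algebraMap_left r b
        | id => rw [cfcHom_id ha]; exact hab
        | star_id => rw [star_trivial, cfcHom_id ha]; exact hab
        | add f g hf hg => rw [map_add]; exact hf.add_left hg
        | mul f g hf hg => rw [map_mul]; exact hf.mul_left hg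
        | frequently g hg =>
          have hcl : IsClosed {g : C(spectrum ℝ a, ℝ) | Commute (cfcHom ha g) b} := by
            apply isClosed_eq
            · exact (continuous_mul_right b).comp (cfcHom_continuous ha)
            · exact (continuous_mul_left b).comp (cfcHom_continuous ha)
          have : g ∈ closure {g : C(spectrum ℝ a, ℝ) | Commute (cfcHom ha g) b} :=
            mem_closure_iff_frequently.mpr hg
          rwa [hcl.closure_eq] at this
      exact key _
    · rw [cfc_apply_of_not_continuousOn a hf]; exact Commute.zero_left b
  · rw [cfc_apply_of_not_predicate a ha]; exact Commute.zero_left b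

lemma commute_cfc_sqrt {H : Type*} [NormedAddCommGroup H] [InnerProductSpace ℂ H]
    [CompleteSpace H] {a b : H →L[ℂ] H} (hann : 0 ≤ a) (hab : Commute a b) :
    Commute (CFC.sqrt a) b := by
  rw [CFC.sqrt_eq_cfc, cfc_nnreal_eq_real NNReal.sqrt a hann]
  exact commute_cfc_real hab _


/-- Orthoadditivity on central multiples of orthogonal projections: if `Z, Z'` are central
effects and `P, P'` mutually orthogonal projections with `φ(P + P') = φ(P) + φ(P')`,
then `Z P + Z' P'` is an effect and `φ(Z P + Z' P') = φ(Z P) + φ(Z' P')`. -/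
theorem sequentialIso_additive_on_central_multiples
    {H K : Type*} [NormedAddCommGroup H] [InnerProductSpace ℂ H] [CompleteSpace H]
    [NormedAddCommGroup K] [InnerProductSpace ℂ K] [CompleteSpace K]
    (M : VonNeumannAlgebra H) (N : VonNeumannAlgebra K)
    (φ : {a : H →L[ℂ] H // IsVNEffect M a} → {b : K →L[ℂ] K // IsVNEffect N b})
    (hbij : Function.Bijective φ)
    (hseq : ∀ (a b : {a : H →L[ℂ] H // IsVNEffect M a})
        (h : IsVNEffect M (CFC.sqrt (a : H →L[ℂ] H) * (b : H →L[ℂ] H) * CFC.sqrt (a : H →L[ℂ] H))),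
      (φ ⟨CFC.sqrt (a : H →L[ℂ] H) * (b : H →L[ℂ] H) * CFC.sqrt (a : H →L[ℂ] H), h⟩ : K →L[ℂ] K)
        = CFC.sqrt (φ a : K →L[ℂ] K) * (φ b : K →L[ℂ] K) * CFC.sqrt (φ a : K →L[ℂ] K))
    (Z Z' P P' : {a : H →L[ℂ] H // IsVNEffect M a})
    (hZ : ∀ x ∈ M, x * (Z : H →L[ℂ] H) = (Z : H →L[ℂ] H) * x)
    (hZ' : ∀ x ∈ M, x * (Z' : H →L[ℂ] H) = (Z' : H →L[ℂ] H) * x)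
    (hP : IsSelfAdjoint (P : H →L[ℂ] H)) (hP2 : (P : H →L[ℂ] H) * (P : H →L[ℂ] H) = P)
    (hP' : IsSelfAdjoint (P' : H →L[ℂ] H)) (hP'2 : (P' : H →L[ℂ] H) * (P' : H →L[ℂ] H) = P')
    (horth : (P : H →L[ℂ] H) * (P' : H →L[ℂ] H) = 0)
    (hPP' : IsVNEffect M ((P : H →L[ℂ] H) + (P' : H →L[ℂ] H)))
    (hφadd : (φ ⟨(P : H →L[ℂ] H) + (P' : H →L[ℂ] H), hPP'⟩ : K →L[ℂ] K)
      = (φ P : K →L[ℂ] K) + (φ P' : K →L[ℂ] K))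
    (hZP : IsVNEffect M ((Z : H →L[ℂ] H) * (P : H →L[ℂ] H)))
    (hZ'P' : IsVNEffect M ((Z' : H →L[ℂ] H) * (P' : H →L[ℂ] H))) :
    ∃ hsum : IsVNEffect M ((Z : H →L[ℂ] H) * (P : H →L[ℂ] H)
        + (Z' : H →L[ℂ] H) * (P' : H →L[ℂ] H)),
      (φ ⟨(Z : H →L[ℂ] H) * (P : H →L[ℂ] H) + (Z' : H →L[ℂ] H) * (P' : H →L[ℂ] H), hsum⟩
          : K →L[ℂ] K)
        = (φ ⟨(Z : H →L[ℂ] H) * (P : H →L[ℂ] H), hZP⟩ : K →L[ℂ] K)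
          + (φ ⟨(Z' : H →L[ℂ] H) * (P' : H →L[ℂ] H), hZ'P'⟩ : K →L[ℂ] K) := by
  set Zc := (Z : H →L[ℂ] H) with hZc
  set Z'c := (Z' : H →L[ℂ] H) with hZ'c
  set Pc := (P : H →L[ℂ] H) with hPc
  set P'c := (P' : H →L[ℂ] H) with hP'c
  have horth' : P'c * Pc = 0 := by
    have := congrArg star horth
    rwa [star_mul, hP.star_eq, hP'.star_eq, star_zero] at this
  have hcPZ : Pc * Zc = Zc * Pc := hZ Pc P.prop.1
  have hcP'Z' : P'c * Z'c = Z'c * P'c := hZ' P'c P'.prop.1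
  have hcPZ' : Pc * Z'c = Z'c * Pc := hZ' Pc P.prop.1
  have hcP'Z : P'c * Zc = Zc * P'c := hZ P'c P'.prop.1
  -- S and its effect property
  have hZPle : Zc * Pc ≤ Pc := by
    have h0 : (0 : H →L[ℂ] H) ≤ 1 - Zc := sub_nonneg.2 Z.prop.2.2
    have hc := star_left_conjugate_nonneg h0 Pc
    rw [hP.star_eq] at hc
    have heq : Pc * (1 - Zc) * Pc = Pc - Zc * Pc := by
      rw [mul_sub, mul_one, hcPZ, sub_mul, mul_assoc, hP2]
    rw [heq] at hc
    exact sub_nonneg.1 hc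
  have hZ'P'le : Z'c * P'c ≤ P'c := by
    have h0 : (0 : H →L[ℂ] H) ≤ 1 - Z'c := sub_nonneg.2 Z'.prop.2.2
    have hc := star_left_conjugate_nonneg h0 P'c
    rw [hP'.star_eq] at hc
    have heq : P'c * (1 - Z'c) * P'c = P'c - Z'c * P'c := by
      rw [mul_sub, mul_one, hcP'Z', sub_mul, mul_assoc, hP'2]
    rw [heq] at hc
    exact sub_nonneg.1 hc
  have hsum : IsVNEffect M (Zc * Pc + Z'c * P'c) :=
    ⟨add_mem hZP.1 hZ'P'.1, add_nonneg hZP.2.1 hZ'P'.2.1,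
      le_trans (add_le_add hZPle hZ'P'le) hPP'.2.2⟩
  set S := Zc * Pc + Z'c * P'c with hS
  have hSnn : (0 : H →L[ℂ] H) ≤ S := hsum.2.1
  -- commutation and product identities
  have hSP : S * Pc = Zc * Pc := by
    rw [hS, add_mul, mul_assoc, hP2, mul_assoc, horth', mul_zero, add_zero]
  have hPS : Pc * S = Zc * Pc := by
    rw [hS, mul_add, ← mul_assoc, ← mul_assoc, hcPZ, hcPZ', mul_assoc, hP2,
      mul_assoc, horth, mul_zero, add_zero]
  have hSP' : S * P'c = Z'c * P'c := by
    rw [hS, add_mul, mul_assoc Zc, horth, mul_zero, mul_assoc, hP'2, zero_add]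
  have hP'S : P'c * S = Z'c * P'c := by
    rw [hS, mul_add, ← mul_assoc, ← mul_assoc, hcP'Z, hcP'Z', mul_assoc Zc, horth', mul_zero,
      mul_assoc, hP'2, zero_add]
  have hsqP : Commute (CFC.sqrt S) Pc := commute_cfc_sqrt hSnn (hPS.trans hSP.symm).symm
  have hsqP' : Commute (CFC.sqrt S) P'c := commute_cfc_sqrt hSnn (hP'S.trans hSP'.symm).symm
  have hself : CFC.sqrt S * CFC.sqrt S = S := CFC.sqrt_mul_sqrt_self S hSnn
  have key1 : CFC.sqrt S * Pc * CFC.sqrt S = Zc * Pc := by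
    rw [hsqP.eq, mul_assoc, hself, hPS]
  have key2 : CFC.sqrt S * P'c * CFC.sqrt S = Z'c * P'c := by
    rw [hsqP'.eq, mul_assoc, hself, hP'S]
  have key3 : CFC.sqrt S * (Pc + P'c) * CFC.sqrt S = S := by
    rw [mul_add, add_mul, key1, key2]
  refine ⟨hsum, ?_⟩
  have h3 : IsVNEffect M (CFC.sqrt S * (Pc + P'c) * CFC.sqrt S) := by rw [key3]; exact hsum
  have e3 := hseq ⟨S, hsum⟩ ⟨Pc + P'c, hPP'⟩ h3
  have h1 : IsVNEffect M (CFC.sqrt S * Pc * CFC.sqrt S) := by rw [key1]; exact hZP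
  have e1 := hseq ⟨S, hsum⟩ P h1
  have h2 : IsVNEffect M (CFC.sqrt S * P'c * CFC.sqrt S) := by rw [key2]; exact hZ'P'
  have e2 := hseq ⟨S, hsum⟩ P' h2
  have r3 : (⟨CFC.sqrt S * (Pc + P'c) * CFC.sqrt S, h3⟩ :
      {a : H →L[ℂ] H // IsVNEffect M a}) = ⟨S, hsum⟩ := Subtype.ext key3
  have r1 : (⟨CFC.sqrt S * Pc * CFC.sqrt S, h1⟩ :
      {a : H →L[ℂ] H // IsVNEffect M a}) = ⟨Zc * Pc, hZP⟩ := Subtype.ext key1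
  have r2 : (⟨CFC.sqrt S * P'c * CFC.sqrt S, h2⟩ :
      {a : H →L[ℂ] H // IsVNEffect M a}) = ⟨Z'c * P'c, hZ'P'⟩ := Subtype.ext key2
  rw [r3] at e3
  rw [r1] at e1
  rw [r2] at e2
  rw [e3, hφadd, mul_add, add_mul, ← e1, ← e2]
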